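/- For all n×n complex matrices A and X, |per(A + X) − per A| ≤ (‖A‖ + ‖X‖)^n − ‖A‖^n, where ‖·‖ denotes the operator norm of a matrix acting on ℂ^n with the Euclidean norm. -/

import Mathlib

open scoped Classical

noncomputable section

open scoped Matrix.Norms.L2Operator

/-- The permanent of a square complex matrix:
`per A = Σ_σ a_{1σ(1)} ⋯ a_{nσ(n)}`. -/
def perm {k : ℕ} (A : Matrix (Fin k) (Fin k) ℂ) : ℂ :=
  ∑ σ : Equiv.Perm (Fin k), ∏ i, A i (σ i)

namespace PermAux

open Matrix

variable {n : ℕ}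

/-- The `n`-fold tensor product of the matrices `M i`, realized concretely as a matrix
indexed by functions `Fin n → Fin n`. -/
def tens (M : Fin n → Matrix (Fin n) (Fin n) ℂ) :
    Matrix (Fin n → Fin n) (Fin n → Fin n) ℂ :=
  Matrix.of fun f g => ∏ i, M i (f i) (g i)

lemma tens_apply (M : Fin n → Matrix (Fin n) (Fin n) ℂ) (f g : Fin n → Fin n) :
    tens M f g = ∏ i, M i (f i) (g i) := rfl

lemma tens_mul (M N : Fin n → Matrix (Fin n) (Fin n) ℂ) :
    tens M * tens N = tens fun i => M i * N i := by
  ext f h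
  simp only [Matrix.mul_apply, tens_apply, ← Finset.prod_mul_distrib]
  rw [Finset.prod_univ_sum, Fintype.piFinset_univ]

lemma tens_one : tens (fun _ : Fin n => (1 : Matrix (Fin n) (Fin n) ℂ)) = 1 := by
  ext f g
  simp only [tens_apply, Matrix.one_apply]
  by_cases h : f = g
  · subst h; simp
  · rw [if_neg h]
    obtain ⟨i, hi⟩ := Function.ne_iff.mp h
    exact Finset.prod_eq_zero (Finset.mem_univ i) (if_neg hi)

lemma opNorm_le_of {m' n' : Type*} [Fintype m'] [Fintype n'] [DecidableEq n']
    (A : Matrix m' n' ℂ) {c : ℝ} (hc : 0 ≤ c)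
    (h : ∀ x : EuclideanSpace ℂ n', ‖(EuclideanSpace.equiv m' ℂ).symm (A *ᵥ x)‖ ≤ c * ‖x‖) :
    ‖A‖ ≤ c := by
  rw [Matrix.l2_opNorm_def]
  exact ContinuousLinearMap.opNorm_le_bound _ hc h

lemma slot_mulVec (a : Fin n) (B : Matrix (Fin n) (Fin n) ℂ) (x : (Fin n → Fin n) → ℂ)
    (f : Fin n → Fin n) :
    (tens (fun i => if i = a then B else 1) *ᵥ x) f
      = ∑ j, B (f a) j * x (Function.update f a j) := by
  have key : ∀ j, tens (fun i => if i = a then B else 1) f (Function.update f a j)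
      = B (f a) j := by
    intro j
    rw [tens_apply, Finset.prod_eq_single a]
    · simp
    · intro i _ hi
      simp [if_neg hi, Function.update_of_ne hi, Matrix.one_apply]
    · simp
  have himage : ∀ g : Fin n → Fin n, g ∉ Finset.univ.image (Function.update f a) →
      tens (fun i => if i = a then B else 1) f g = 0 := by
    intro g hg
    have hex : ∃ i, i ≠ a ∧ f i ≠ g i := by
      by_contra hc
      push_neg at hc
      refine hg (Finset.mem_image.mpr ⟨g a, Finset.mem_univ _, ?_⟩)
      funext i
      by_cases hia : i = a
      · subst hia; simp
      · rw [Function.update_of_ne hia]; exact hc i hia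
    obtain ⟨i, hia, hig⟩ := hex
    rw [tens_apply]
    refine Finset.prod_eq_zero (Finset.mem_univ i) ?_
    rw [if_neg hia, Matrix.one_apply, if_neg hig]
  calc (tens (fun i => if i = a then B else 1) *ᵥ x) f
      = ∑ g ∈ Finset.univ.image (Function.update f a),
          tens (fun i => if i = a then B else 1) f g * x g := by
        simp only [Matrix.mulVec, dotProduct]
        exact (Finset.sum_subset (Finset.subset_univ _)
          (fun g _ hg => by rw [himage g hg, zero_mul])).symm
    _ = ∑ j, B (f a) j * x (Function.update f a j) := by
        rw [Finset.sum_image (fun i _ j _ h => Function.update_injective f a h)]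
        exact Finset.sum_congr rfl fun j _ => by rw [key]

lemma slot_norm_le (a : Fin n) (B : Matrix (Fin n) (Fin n) ℂ) :
    ‖tens (fun i => if i = a then B else 1)‖ ≤ ‖B‖ := by
  refine opNorm_le_of _ (norm_nonneg B) fun x => ?_
  set S := tens (fun i => if i = a then B else 1) with hS
  set e := Equiv.funSplitAt a (Fin n) with he
  set v : ({j // j ≠ a} → Fin n) → EuclideanSpace ℂ (Fin n) :=
    fun h => (WithLp.equiv 2 (Fin n → ℂ)).symm (fun k => x (e.symm (k, h))) with hv
  have hline : ∀ (r : Fin n) (h : {j // j ≠ a} → Fin n),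
      (S *ᵥ (x : (Fin n → Fin n) → ℂ)) (e.symm (r, h)) = (B *ᵥ (v h : Fin n → ℂ)) r := by
    intro r h
    rw [hS, slot_mulVec]
    have h1 : (e.symm (r, h)) a = r := by simp [he]
    have h2 : ∀ j, Function.update (e.symm (r, h)) a j = e.symm (j, h) := by
      intro j; funext i
      by_cases hia : i = a
      · subst hia; simp [he]
      · rw [Function.update_of_ne hia]; simp [he, hia]
    rw [h1]
    show (∑ j, B r j * x (Function.update (e.symm (r, h)) a j))
        = ∑ j, B r j * (v h : Fin n → ℂ) j
    exact Finset.sum_congr rfl fun j _ => by rw [h2 j]; rfl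
  have hsum : ∑ f, ‖(S *ᵥ (x : (Fin n → Fin n) → ℂ)) f‖ ^ 2
      ≤ ‖B‖ ^ 2 * ∑ f, ‖x f‖ ^ 2 := by
    calc ∑ f, ‖(S *ᵥ (x : (Fin n → Fin n) → ℂ)) f‖ ^ 2
        = ∑ p : Fin n × ({j // j ≠ a} → Fin n),
            ‖(S *ᵥ (x : (Fin n → Fin n) → ℂ)) (e.symm p)‖ ^ 2 :=
          (Equiv.sum_comp e.symm _).symm
      _ = ∑ h : {j // j ≠ a} → Fin n, ∑ r : Fin n, ‖(B *ᵥ (v h : Fin n → ℂ)) r‖ ^ 2 := by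
          rw [Fintype.sum_prod_type_right]
          exact Finset.sum_congr rfl fun h _ => Finset.sum_congr rfl fun r _ => by
            rw [hline r h]
      _ ≤ ∑ h : {j // j ≠ a} → Fin n, ‖B‖ ^ 2 * ∑ r, ‖(v h) r‖ ^ 2 := by
          refine Finset.sum_le_sum fun h _ => ?_
          have := Matrix.l2_opNorm_mulVec B (v h)
          have hnn : ‖(EuclideanSpace.equiv (Fin n) ℂ).symm (B *ᵥ (v h : Fin n → ℂ))‖ ^ 2
              ≤ (‖B‖ * ‖v h‖) ^ 2 := pow_le_pow_left₀ (norm_nonneg _) this 2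
          rw [EuclideanSpace.norm_eq, EuclideanSpace.norm_eq] at hnn
          rw [Real.sq_sqrt (by positivity), mul_pow, Real.sq_sqrt (by positivity)] at hnn
          calc ∑ r : Fin n, ‖(B *ᵥ (v h : Fin n → ℂ)) r‖ ^ 2
              = ∑ r : Fin n,
                  ‖(EuclideanSpace.equiv (Fin n) ℂ).symm (B *ᵥ (v h : Fin n → ℂ)) r‖ ^ 2 := rfl
            _ ≤ ‖B‖ ^ 2 * ∑ r, ‖(v h) r‖ ^ 2 := hnn
      _ = ‖B‖ ^ 2 * ∑ p : Fin n × ({j // j ≠ a} → Fin n), ‖x (e.symm p)‖ ^ 2 := by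
          rw [Fintype.sum_prod_type_right, Finset.mul_sum]
          exact Finset.sum_congr rfl fun h _ => rfl
      _ = ‖B‖ ^ 2 * ∑ f, ‖x f‖ ^ 2 := by rw [Equiv.sum_comp e.symm (fun f => ‖x f‖ ^ 2)]
  have lhs_eq :
      ‖(EuclideanSpace.equiv (Fin n → Fin n) ℂ).symm (S *ᵥ (x : (Fin n → Fin n) → ℂ))‖ ^ 2
      = ∑ f, ‖(S *ᵥ (x : (Fin n → Fin n) → ℂ)) f‖ ^ 2 := by
    rw [EuclideanSpace.norm_eq, Real.sq_sqrt (by positivity)]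
    rfl
  have rhs_eq : (‖B‖ * ‖x‖) ^ 2 = ‖B‖ ^ 2 * ∑ f, ‖x f‖ ^ 2 := by
    rw [mul_pow, EuclideanSpace.norm_eq, Real.sq_sqrt (by positivity)]
  have hfin :
      ‖(EuclideanSpace.equiv (Fin n → Fin n) ℂ).symm (S *ᵥ (x : (Fin n → Fin n) → ℂ))‖ ^ 2
      ≤ (‖B‖ * ‖x‖) ^ 2 := by rw [lhs_eq, rhs_eq]; exact hsum
  exact (pow_le_pow_iff_left₀ (norm_nonneg _) (by positivity) (by norm_num)).mp hfin

lemma tens_norm_le (M : Fin n → Matrix (Fin n) (Fin n) ℂ) :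
    ‖tens M‖ ≤ ∏ i, ‖M i‖ := by
  have main : ∀ s : Finset (Fin n),
      ‖tens (fun i => if i ∈ s then M i else 1)‖ ≤ ∏ i ∈ s, ‖M i‖ := by
    intro s
    induction s using Finset.induction_on with
    | empty =>
        simp only [Finset.notMem_empty, if_false, Finset.prod_empty]
        rw [tens_one]
        refine opNorm_le_of _ zero_le_one fun x => ?_
        rw [Matrix.one_mulVec, one_mul]
        exact le_of_eq rfl
    | insert a s ha ih =>
        have hfac : (fun i => if i ∈ insert a s then M i else 1)
            = fun i => (if i = a then M a else 1) * (if i ∈ s then M i else 1) := by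
          funext i
          by_cases hia : i = a
          · subst hia; simp [ha]
          · by_cases his : i ∈ s <;> simp [hia, his, Finset.mem_insert]
        rw [hfac, ← tens_mul, Finset.prod_insert ha]
        calc ‖tens (fun i => if i = a then M a else 1)
                * tens (fun i => if i ∈ s then M i else 1)‖
            ≤ ‖tens (fun i => if i = a then M a else 1)‖
                * ‖tens (fun i => if i ∈ s then M i else 1)‖ := Matrix.l2_opNorm_mul _ _
          _ ≤ ‖M a‖ * ∏ i ∈ s, ‖M i‖ :=
              mul_le_mul (slot_norm_le a (M a)) ih (norm_nonneg _) (norm_nonneg _)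
  simpa using main Finset.univ

/-- The symmetrizing vector: the indicator of the set of bijections. -/
def svec : (Fin n → Fin n) → ℂ := fun f => if Function.Bijective f then 1 else 0

/-- Permutations of `Fin n` are in bijection with bijective functions. -/
def permEquiv : Equiv.Perm (Fin n) ≃ {f : Fin n → Fin n // Function.Bijective f} where
  toFun σ := ⟨⇑σ, σ.bijective⟩
  invFun f := Equiv.ofBijective f.1 f.2
  left_inv σ := Equiv.ext fun _ => rfl
  right_inv f := rfl

lemma sum_perm {M : Type*} [AddCommMonoid M] (F : (Fin n → Fin n) → M) :
    ∑ f : Fin n → Fin n, (if Function.Bijective f then F f else 0)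
      = ∑ σ : Equiv.Perm (Fin n), F ⇑σ := by
  rw [← Finset.sum_filter, Finset.sum_subtype (p := fun f : Fin n → Fin n => Function.Bijective f)
      (Finset.univ.filter fun f : Fin n → Fin n => Function.Bijective f)
      (fun x => by simp only [Finset.mem_filter, Finset.mem_univ, true_and]) F]
  exact (Fintype.sum_equiv permEquiv _ _ fun σ => rfl).symm

lemma dot_tens_const (A : Matrix (Fin n) (Fin n) ℂ) :
    svec ⬝ᵥ (tens (fun _ => A) *ᵥ svec) = ((Nat.factorial n : ℕ) : ℂ) * perm A := by
  have expand : svec ⬝ᵥ (tens (fun _ => A) *ᵥ svec)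
      = ∑ σ : Equiv.Perm (Fin n), ∑ τ : Equiv.Perm (Fin n), ∏ i, A (σ i) (τ i) := by
    simp only [dotProduct, Matrix.mulVec]
    calc ∑ f, svec f * ∑ g, tens (fun _ => A) f g * svec g
        = ∑ f, (if Function.Bijective f then
            (∑ g, (if Function.Bijective g then (∏ i, A (f i) (g i)) else 0)) else 0) := by
          refine Finset.sum_congr rfl fun f _ => ?_
          unfold svec
          by_cases hf : Function.Bijective f
          · rw [if_pos hf, if_pos hf, one_mul]
            refine Finset.sum_congr rfl fun g _ => ?_
            by_cases hg : Function.Bijective g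
            · rw [if_pos hg, if_pos hg, mul_one]; rfl
            · rw [if_neg hg, if_neg hg, mul_zero]
          · rw [if_neg hf, if_neg hf, zero_mul]
      _ = ∑ σ : Equiv.Perm (Fin n),
            ∑ g, (if Function.Bijective g then (∏ i, A (σ i) (g i)) else 0) :=
          sum_perm _
      _ = ∑ σ : Equiv.Perm (Fin n), ∑ τ : Equiv.Perm (Fin n), ∏ i, A (σ i) (τ i) :=
          Finset.sum_congr rfl fun σ _ => sum_perm _
  rw [expand]
  have hστ : ∀ σ : Equiv.Perm (Fin n),
      ∑ τ : Equiv.Perm (Fin n), ∏ i, A (σ i) (τ i) = perm A := by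
    intro σ
    have h1 : ∀ τ : Equiv.Perm (Fin n), ∏ i, A (σ i) (τ i) = ∏ j, A j ((τ * σ⁻¹) j) := by
      intro τ
      rw [← Equiv.prod_comp σ (fun j => A j ((τ * σ⁻¹) j))]
      exact Finset.prod_congr rfl fun i _ => by simp
    calc ∑ τ : Equiv.Perm (Fin n), ∏ i, A (σ i) (τ i)
        = ∑ τ : Equiv.Perm (Fin n), ∏ j, A j ((τ * σ⁻¹) j) :=
          Finset.sum_congr rfl fun τ _ => h1 τ
      _ = ∑ ρ : Equiv.Perm (Fin n), ∏ j, A j (ρ j) :=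
          Fintype.sum_equiv (Equiv.mulRight σ⁻¹) _ _ (fun τ => rfl)
      _ = perm A := rfl
  rw [Finset.sum_congr rfl fun σ _ => hστ σ, Finset.sum_const, Finset.card_univ,
    Fintype.card_perm, Fintype.card_fin, nsmul_eq_mul]

lemma svec_norm_sq : ∑ f : Fin n → Fin n, ‖svec f‖ ^ 2 = ((Nat.factorial n : ℕ) : ℝ) := by
  have h1 : ∀ f : Fin n → Fin n,
      ‖svec f‖ ^ 2 = if Function.Bijective f then (1 : ℝ) else 0 := by
    intro f; unfold svec; split_ifs <;> simp
  rw [Finset.sum_congr rfl fun f _ => h1 f, sum_perm (fun _ => (1 : ℝ))]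
  simp [Fintype.card_perm]

lemma dot_le (T : Matrix (Fin n → Fin n) (Fin n → Fin n) ℂ) :
    ‖svec ⬝ᵥ (T *ᵥ svec)‖ ≤ ‖T‖ * ((Nat.factorial n : ℕ) : ℝ) := by
  set s : EuclideanSpace ℂ (Fin n → Fin n) :=
    (WithLp.equiv 2 ((Fin n → Fin n) → ℂ)).symm svec with hs
  have hstar : star (svec (n := n)) = svec := by
    funext f; simp only [Pi.star_apply, svec]; split_ifs <;> simp
  have hinner : (inner ℂ s ((WithLp.equiv 2 ((Fin n → Fin n) → ℂ)).symm (T *ᵥ svec)) : ℂ)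
      = svec ⬝ᵥ (T *ᵥ svec) := by
    rw [hs]; simp only [WithLp.equiv_symm_apply]
    rw [EuclideanSpace.inner_toLp_toLp, hstar, dotProduct_comm]
  have hs_norm : ‖s‖ ^ 2 = ((Nat.factorial n : ℕ) : ℝ) := by
    rw [hs, EuclideanSpace.norm_eq, Real.sq_sqrt (by positivity)]
    exact svec_norm_sq
  calc ‖svec ⬝ᵥ (T *ᵥ svec)‖
      = ‖(inner ℂ s ((WithLp.equiv 2 ((Fin n → Fin n) → ℂ)).symm (T *ᵥ svec)) : ℂ)‖ := by
        rw [hinner]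
    _ ≤ ‖s‖ * ‖(WithLp.equiv 2 ((Fin n → Fin n) → ℂ)).symm (T *ᵥ svec)‖ :=
        norm_inner_le_norm _ _
    _ ≤ ‖s‖ * (‖T‖ * ‖s‖) :=
        mul_le_mul_of_nonneg_left (Matrix.l2_opNorm_mulVec T s) (norm_nonneg _)
    _ = ‖T‖ * ((Nat.factorial n : ℕ) : ℝ) := by rw [← hs_norm]; ring

lemma prod_ite_split {β : Type*} [CommMonoid β] (t : Finset (Fin n)) (a b : Fin n → β) :
    ∏ i, (if i ∈ t then a i else b i) = (∏ i ∈ t, a i) * ∏ i ∈ tᶜ, b i := by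
  rw [Finset.prod_ite, Finset.filter_univ_mem]
  congr 1
  · congr 1
    rw [Finset.compl_eq_univ_sdiff, Finset.sdiff_eq_filter]

end PermAux

/-- `|per(A + X) − per A| ≤ (‖A‖ + ‖X‖)^n − ‖A‖^n`, where `‖·‖` on matrices
is the operator norm induced by the Euclidean norm on `ℂⁿ`. -/
theorem perm_perturbation_bound (n : ℕ) (A X : Matrix (Fin n) (Fin n) ℂ) :
    ‖perm (A + X) - perm A‖ ≤ (‖A‖ + ‖X‖) ^ n - ‖A‖ ^ n := by
  classical
  set T := PermAux.tens (fun _ : Fin n => A + X) - PermAux.tens (fun _ : Fin n => A) with hT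
  have hdot : dotProduct PermAux.svec (Matrix.mulVec T PermAux.svec) = ((Nat.factorial n : ℕ) : ℂ) * (perm (A + X) - perm A) := by
    rw [hT, Matrix.sub_mulVec, dotProduct_sub, PermAux.dot_tens_const,
      PermAux.dot_tens_const]
    ring
  -- expansion of the tensor power of `A + X`
  have hexp : PermAux.tens (fun _ : Fin n => A + X)
      = ∑ S : Finset (Fin n), PermAux.tens (fun i => if i ∈ S then A else X) := by
    ext f g
    rw [PermAux.tens_apply]
    simp only [Matrix.add_apply]
    rw [Fintype.prod_add (fun i => A (f i) (g i)) (fun i => X (f i) (g i)), Matrix.sum_apply]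
    refine Finset.sum_congr rfl fun S _ => ?_
    rw [PermAux.tens_apply,
      Finset.prod_congr rfl fun i (_ : i ∈ Finset.univ) =>
        apply_ite (fun M : Matrix (Fin n) (Fin n) ℂ => M (f i) (g i)) (i ∈ S) A X,
      PermAux.prod_ite_split]
  have hconst : PermAux.tens (fun _ : Fin n => A)
      = PermAux.tens (fun i => if i ∈ (Finset.univ : Finset (Fin n)) then A else X) := by
    congr 1; funext i; simp
  have hTsum : T = ∑ S ∈ (Finset.univ : Finset (Finset (Fin n))).erase Finset.univ,
      PermAux.tens (fun i => if i ∈ S then A else X) := by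
    rw [hT, hexp, hconst,
      ← Finset.sum_erase_add (Finset.univ : Finset (Finset (Fin n)))
        (fun S => PermAux.tens (fun i => if i ∈ S then A else X)) (Finset.mem_univ _)]
    exact add_sub_cancel_right _ _
  have hTbound : ‖T‖ ≤ (‖A‖ + ‖X‖) ^ n - ‖A‖ ^ n := by
    have h1 : ‖T‖ ≤ ∑ S ∈ (Finset.univ : Finset (Finset (Fin n))).erase Finset.univ,
        ((∏ _i ∈ S, ‖A‖) * ∏ _i ∈ Sᶜ, ‖X‖) := by
      rw [hTsum]
      refine (norm_sum_le _ _).trans (Finset.sum_le_sum fun S _ => ?_)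
      refine (PermAux.tens_norm_le _).trans (le_of_eq ?_)
      rw [Finset.prod_congr rfl fun i (_ : i ∈ Finset.univ) =>
          apply_ite (fun M : Matrix (Fin n) (Fin n) ℂ => ‖M‖) (i ∈ S) A X,
        PermAux.prod_ite_split]
    have h2 : ∑ S ∈ (Finset.univ : Finset (Finset (Fin n))).erase Finset.univ,
        ((∏ _i ∈ S, ‖A‖) * ∏ _i ∈ Sᶜ, ‖X‖) = (‖A‖ + ‖X‖) ^ n - ‖A‖ ^ n := by
      have h3 : (‖A‖ + ‖X‖) ^ n
          = ∑ S : Finset (Fin n), ((∏ _i ∈ S, ‖A‖) * ∏ _i ∈ Sᶜ, ‖X‖) := by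
        rw [← Fintype.prod_add (fun _ : Fin n => ‖A‖) (fun _ : Fin n => ‖X‖)]
        simp
      have h4 : ((∏ _i ∈ (Finset.univ : Finset (Fin n)), ‖A‖) * ∏ _i ∈ (Finset.univ : Finset (Fin n))ᶜ, ‖X‖)
          = ‖A‖ ^ n := by simp
      rw [h3, ← Finset.sum_erase_add (Finset.univ : Finset (Finset (Fin n)))
        (fun S => (∏ _i ∈ S, ‖A‖) * ∏ _i ∈ Sᶜ, ‖X‖) (Finset.mem_univ Finset.univ), h4]
      ring
    rw [← h2]; exact h1
  have hfact : (0 : ℝ) < ((Nat.factorial n : ℕ) : ℝ) := by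
    exact_mod_cast Nat.factorial_pos n
  have h5 : ‖perm (A + X) - perm A‖ * ((Nat.factorial n : ℕ) : ℝ) ≤ ((‖A‖ + ‖X‖) ^ n - ‖A‖ ^ n) * ((Nat.factorial n : ℕ) : ℝ) := by
    calc ‖perm (A + X) - perm A‖ * ((Nat.factorial n : ℕ) : ℝ)
        = ‖((Nat.factorial n : ℕ) : ℂ) * (perm (A + X) - perm A)‖ := by
          rw [norm_mul]
          simp [Complex.norm_natCast]
          ring
      _ = ‖dotProduct PermAux.svec (Matrix.mulVec T PermAux.svec)‖ := by rw [hdot]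
      _ ≤ ‖T‖ * ((Nat.factorial n : ℕ) : ℝ) := PermAux.dot_le T
      _ ≤ ((‖A‖ + ‖X‖) ^ n - ‖A‖ ^ n) * ((Nat.factorial n : ℕ) : ℝ) :=
          mul_le_mul_of_nonneg_right hTbound hfact.le
  exact le_of_mul_le_mul_right h5 hfact
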